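/- For all y ≥ π, (y+π)|sin y| ≤ 1.68 y. -/

import Mathlib

open Real

lemma aux_sin_ge_cubic (x : ℝ) (hx : 0 ≤ x) : x - x^3/6 ≤ Real.sin x := by
  have key : ∀ y : ℝ, HasDerivAt (fun z => Real.sin z - z + z^3/6)
      (Real.cos y - 1 + y^2/2) y := by
    intro y
    have h1 := (Real.hasDerivAt_sin y).sub (hasDerivAt_id y)
    have h2 : HasDerivAt (fun z : ℝ => z^3/6) (y^2/2) y := by
      have := (hasDerivAt_pow 3 y).div_const 6
      exact this.congr_deriv (by push_cast; ring)
    exact h1.add h2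
  have mono : MonotoneOn (fun z => Real.sin z - z + z^3/6) (Set.Ici 0) := by
    apply monotoneOn_of_deriv_nonneg (convex_Ici 0)
    · exact Continuous.continuousOn (by continuity)
    · intro y hy
      exact ((key y).differentiableAt).differentiableWithinAt
    · intro y hy
      rw [(key y).deriv]
      nlinarith [Real.one_sub_sq_div_two_le_cos (x := y)]
  have h := mono (Set.self_mem_Ici) (Set.mem_Ici.2 hx) hx
  simp only [Real.sin_zero] at h
  nlinarith [h]

lemma aux_cos_le_quartic (x : ℝ) (hx : 0 ≤ x) : Real.cos x ≤ 1 - x^2/2 + x^4/24 := by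
  have key : ∀ y : ℝ, HasDerivAt (fun z => 1 - z^2/2 + z^4/24 - Real.cos z)
      (-y + y^3/6 + Real.sin y) y := by
    intro y
    have h2 : HasDerivAt (fun z : ℝ => 1 - z^2/2 + z^4/24) (-y + y^3/6) y := by
      have ha : HasDerivAt (fun z : ℝ => z^2/2) y y := by
        have := (hasDerivAt_pow 2 y).div_const 2
        exact this.congr_deriv (by push_cast; ring)
      have hb : HasDerivAt (fun z : ℝ => z^4/24) (y^3/6) y := by
        have := (hasDerivAt_pow 4 y).div_const 24
        exact this.congr_deriv (by push_cast; ring)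
      have := ((hasDerivAt_const y (1:ℝ)).sub ha).add hb
      exact this.congr_deriv (by ring)
    have := h2.sub (Real.hasDerivAt_cos y)
    exact this.congr_deriv (by ring)
  have mono : MonotoneOn (fun z => 1 - z^2/2 + z^4/24 - Real.cos z) (Set.Ici 0) := by
    apply monotoneOn_of_deriv_nonneg (convex_Ici 0)
    · exact Continuous.continuousOn (by continuity)
    · intro y hy
      exact ((key y).differentiableAt).differentiableWithinAt
    · intro y hy
      rw [(key y).deriv]
      have hy0 : 0 ≤ y := le_of_lt (by simpa using hy)
      nlinarith [aux_sin_ge_cubic y hy0]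
  have h := mono (Set.self_mem_Ici) (Set.mem_Ici.2 hx) hx
  simp only [Real.cos_zero] at h
  nlinarith [h]

lemma aux_sin_le_quintic (x : ℝ) (hx : 0 ≤ x) :
    Real.sin x ≤ x - x^3/6 + x^5/120 := by
  have key : ∀ y : ℝ, HasDerivAt (fun z => z - z^3/6 + z^5/120 - Real.sin z)
      (1 - y^2/2 + y^4/24 - Real.cos y) y := by
    intro y
    have ha : HasDerivAt (fun z : ℝ => z^3/6) (y^2/2) y := by
      have := (hasDerivAt_pow 3 y).div_const 6
      exact this.congr_deriv (by push_cast; ring)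
    have hb : HasDerivAt (fun z : ℝ => z^5/120) (y^4/24) y := by
      have := (hasDerivAt_pow 5 y).div_const 120
      exact this.congr_deriv (by push_cast; ring)
    have := (((hasDerivAt_id y).sub ha).add hb).sub (Real.hasDerivAt_sin y)
    exact this
  have mono : MonotoneOn (fun z => z - z^3/6 + z^5/120 - Real.sin z) (Set.Ici 0) := by
    apply monotoneOn_of_deriv_nonneg (convex_Ici 0)
    · exact Continuous.continuousOn (by continuity)
    · intro y hy
      exact ((key y).differentiableAt).differentiableWithinAt
    · intro y hy
      rw [(key y).deriv]
      have hy0 : 0 ≤ y := le_of_lt (by simpa using hy)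
      nlinarith [aux_cos_le_quartic y hy0]
  have h := mono (Set.self_mem_Ici) (Set.mem_Ici.2 hx) hx
  simp only [Real.sin_zero] at h
  nlinarith [h]

lemma aux_poly (t : ℝ) (ht0 : 0 ≤ t) (ht1 : t ≤ 1.4784438) :
    (t + 6.283186) * (t - t^3/6 + t^5/120) ≤ 1.68 * t + 5.2778745 := by
  nlinarith [sq_nonneg t, sq_nonneg (t - 1), mul_nonneg ht0 ht0, sq_nonneg (t*t),
    mul_nonneg (mul_nonneg ht0 ht0) ht0,
    mul_nonneg (sub_nonneg.2 ht1) ht0,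
    mul_nonneg (mul_nonneg (sub_nonneg.2 ht1) ht0) ht0,
    mul_nonneg (mul_nonneg (mul_nonneg (sub_nonneg.2 ht1) ht0) ht0) ht0,
    mul_nonneg (mul_nonneg (mul_nonneg (mul_nonneg (sub_nonneg.2 ht1) ht0) ht0) ht0) ht0,
    mul_nonneg (sub_nonneg.2 ht1) (sub_nonneg.2 ht1),
    mul_nonneg (mul_nonneg (sub_nonneg.2 ht1) (sub_nonneg.2 ht1)) ht0]

/-- For all `y ≥ π`, `(y+π)|sin y| ≤ 1.68 y`. -/
theorem stmt17 (y : ℝ) (hy : Real.pi ≤ y) :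
    (y + Real.pi) * |Real.sin y| ≤ 1.68 * y := by
  have hpi := Real.pi_gt_d6
  have hpi' := Real.pi_lt_d6
  by_cases hA : y + Real.pi ≤ 1.68 * y
  · calc (y + Real.pi) * |Real.sin y| ≤ (y + Real.pi) * 1 := by
          apply mul_le_mul_of_nonneg_left (abs_sin_le_one y) (by linarith)
        _ ≤ 1.68 * y := by linarith
  · push_neg at hA
    set t := y - Real.pi with htdef
    have ht0 : 0 ≤ t := by linarith
    have ht1 : t ≤ 1.4784438 := by nlinarith
    have hsin : Real.sin y = -Real.sin t := by
      have : y = t + Real.pi := by ring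
      rw [this, Real.sin_add_pi]
    have hsnn : 0 ≤ Real.sin t :=
      Real.sin_nonneg_of_nonneg_of_le_pi ht0 (by linarith)
    have habs : |Real.sin y| = Real.sin t := by
      rw [hsin, abs_neg, abs_of_nonneg hsnn]
    rw [habs]
    have hq := aux_sin_le_quintic t ht0
    have hp0 : 0 ≤ t - t^3/6 + t^5/120 := le_trans hsnn hq
    have hyp : y + Real.pi = t + 2 * Real.pi := by rw [htdef]; ring
    rw [hyp]
    have hpos : (0:ℝ) < t + 2 * Real.pi := by linarith
    calc (t + 2 * Real.pi) * Real.sin t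
        ≤ (t + 2 * Real.pi) * (t - t^3/6 + t^5/120) :=
          mul_le_mul_of_nonneg_left hq (le_of_lt hpos)
      _ ≤ (t + 6.283186) * (t - t^3/6 + t^5/120) := by nlinarith
      _ ≤ 1.68 * t + 5.2778745 := aux_poly t ht0 ht1
      _ ≤ 1.68 * y := by rw [htdef]; nlinarith
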